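/- Let f : R^n → R be convex differentiable, bounded below, with L-Lipschitz gradient, and let {x_k}, {y_k} be sequences generated by the VMEPIHT method with parameters λ, μ > 0. Then ∑_{k=1}^∞ ‖x_k − y_k‖² < ∞, and in particular ‖x_k − y_k‖ → 0. -/

import Mathlib

open Filter
open scoped Classical

/-- `‖x‖₀`: the number of nonzero components of `x`. -/
noncomputable def norm0 {n : ℕ} (x : EuclideanSpace ℝ (Fin n)) : ℕ :=
  (Finset.univ.filter fun i => x i ≠ 0).card

lemma descent_lemma {n : ℕ} (f : EuclideanSpace ℝ (Fin n) → ℝ)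
    (gradf : EuclideanSpace ℝ (Fin n) → EuclideanSpace ℝ (Fin n))
    (hf : ∀ z, HasGradientAt f (gradf z) z)
    (L : ℝ) (hL : 0 ≤ L)
    (hLip : ∀ u v, ‖gradf u - gradf v‖ ≤ L * ‖u - v‖)
    (u v : EuclideanSpace ℝ (Fin n)) :
    f u ≤ f v + inner ℝ (gradf v) (u - v) + L / 2 * ‖u - v‖ ^ 2 := by
  set d := u - v with hd
  have hg : Continuous gradf := by
    have : LipschitzWith (Real.toNNReal L) gradf :=
      LipschitzWith.of_dist_le_mul fun a b => by
        simpa [dist_eq_norm, Real.coe_toNNReal L hL] using hLip a b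
    exact this.continuous
  have line : ∀ t : ℝ, HasDerivAt (fun t : ℝ => v + t • d) d t := fun t => by
    simpa using ((hasDerivAt_id t).smul_const d).const_add v
  have hψ : ∀ t : ℝ, HasDerivAt (fun t : ℝ => f (v + t • d))
      ((inner ℝ (gradf (v + t • d)) d : ℝ)) t := fun t => by
    have h1 := (hf (v + t • d)).hasFDerivAt.comp_hasDerivAt t (line t)
    simp at h1; exact h1
  have hcont : Continuous fun t : ℝ => (inner ℝ (gradf (v + t • d)) d : ℝ) := by
    exact (hg.comp (continuous_const.add (continuous_id'.smul continuous_const))).inner continuous_const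
  have hFTC : ∫ t in (0:ℝ)..1, (inner ℝ (gradf (v + t • d)) d : ℝ)
      = f (v + (1:ℝ) • d) - f (v + (0:ℝ) • d) :=
    intervalIntegral.integral_eq_sub_of_hasDerivAt (fun t _ => hψ t)
      (hcont.intervalIntegrable 0 1)
  have hends : f (v + (1:ℝ) • d) - f (v + (0:ℝ) • d) = f u - f v := by
    simp [hd]
  have hmono : ∫ t in (0:ℝ)..1, (inner ℝ (gradf (v + t • d)) d : ℝ)
      ≤ ∫ t in (0:ℝ)..1, ((inner ℝ (gradf v) d : ℝ) + L * t * ‖d‖ ^ 2) := by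
    apply intervalIntegral.integral_mono_on (by norm_num)
      (hcont.intervalIntegrable 0 1)
      ((continuous_const.add ((continuous_const.mul continuous_id').mul continuous_const)).intervalIntegrable 0 1)
    intro t ht
    have ht0 : 0 ≤ t := ht.1
    have : (inner ℝ (gradf (v + t • d)) d : ℝ) - inner ℝ (gradf v) d
        = inner ℝ (gradf (v + t • d) - gradf v) d := by
      rw [inner_sub_left]
    have hcs : (inner ℝ (gradf (v + t • d) - gradf v) d : ℝ)
        ≤ ‖gradf (v + t • d) - gradf v‖ * ‖d‖ := real_inner_le_norm _ _
    have hlip2 : ‖gradf (v + t • d) - gradf v‖ ≤ L * (t * ‖d‖) := by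
      have := hLip (v + t • d) v
      simpa [norm_smul, abs_of_nonneg ht0] using this
    have h3 := hcs.trans (mul_le_mul_of_nonneg_right hlip2 (norm_nonneg d))
    rw [inner_sub_left] at h3
    have h4 : L * (t * ‖d‖) * ‖d‖ = L * t * ‖d‖ ^ 2 := by ring
    show (inner ℝ (gradf (v + t • d)) d : ℝ) ≤ inner ℝ (gradf v) d + L * t * ‖d‖ ^ 2
    linarith
  have hval : ∫ t in (0:ℝ)..1, ((inner ℝ (gradf v) d : ℝ) + L * t * ‖d‖ ^ 2)
      = (inner ℝ (gradf v) d : ℝ) + L / 2 * ‖d‖ ^ 2 := by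
    rw [intervalIntegral.integral_add (g := fun t : ℝ => L * t * ‖d‖ ^ 2) ((continuous_const).intervalIntegrable 0 1)
      (((continuous_const.mul continuous_id').mul continuous_const : Continuous fun t : ℝ => L * t * ‖d‖ ^ 2).intervalIntegrable 0 1)]
    have h2 : ∫ t in (0:ℝ)..1, L * t * ‖d‖ ^ 2
        = (L * ‖d‖ ^ 2) * ∫ t in (0:ℝ)..1, t := by
      rw [← intervalIntegral.integral_const_mul]
      congr 1; ext t; ring
    simp [h2, integral_id]
    ring
  have := hFTC ▸ hmono
  rw [hval, hends] at this
  linarith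

theorem vmepiht_summable_residual {n : ℕ}
    (f : EuclideanSpace ℝ (Fin n) → ℝ)
    (gradf : EuclideanSpace ℝ (Fin n) → EuclideanSpace ℝ (Fin n))
    (hconv : ConvexOn ℝ Set.univ f)
    (hf : ∀ z, HasGradientAt f (gradf z) z)
    (hbdd : ∃ B : ℝ, ∀ z, B ≤ f z)
    (L lam μ : ℝ) (hL : 0 < L) (hlam : 0 < lam) (hμ : 0 < μ)
    (hLip : ∀ u v, ‖gradf u - gradf v‖ ≤ L * ‖u - v‖)
    (x y : ℕ → EuclideanSpace ℝ (Fin n))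
    -- x k solves the PIHT subproblem at y k
    (hx : ∀ k, ∀ z : EuclideanSpace ℝ (Fin n),
        lam * (norm0 (x k) : ℝ) + L / 2 * ‖x k - y k + (1 / L) • gradf (y k)‖ ^ 2
          + μ / 2 * ‖x k - y k‖ ^ 2
        ≤ lam * (norm0 z : ℝ) + L / 2 * ‖z - y k + (1 / L) • gradf (y k)‖ ^ 2
          + μ / 2 * ‖z - y k‖ ^ 2)
    -- the variable metric step decreases f and does not increase the support
    (hdec : ∀ k, f (y (k + 1)) ≤ f (x k))
    (hsupp : ∀ k, norm0 (y (k + 1)) ≤ norm0 (x k)) :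
    Summable (fun k => ‖x k - y k‖ ^ 2) ∧
      Tendsto (fun k => ‖x k - y k‖) atTop (nhds 0) := by
  obtain ⟨B, hB⟩ := hbdd
  set H : ℕ → ℝ := fun k => f (y k) + lam * (norm0 (y k) : ℝ) with hH
  -- key per-step inequality
  have key : ∀ k, f (x k) + lam * (norm0 (x k) : ℝ) + μ / 2 * ‖x k - y k‖ ^ 2
      ≤ f (y k) + lam * (norm0 (y k) : ℝ) := by
    intro k
    have h1 := hx k (y k)
    rw [sub_self, zero_add, norm_zero] at h1
    have hexp : ‖x k - y k + (1 / L) • gradf (y k)‖ ^ 2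
        = ‖x k - y k‖ ^ 2 + 2 * ((1 / L) * inner ℝ (x k - y k) (gradf (y k)))
          + ‖(1 / L) • gradf (y k)‖ ^ 2 := by
      rw [norm_add_sq_real, real_inner_smul_right]
    rw [hexp] at h1
    have hdesc := descent_lemma f gradf hf L hL.le hLip (x k) (y k)
    rw [real_inner_comm] at hdesc
    have hsimp : L / 2 * (‖x k - y k‖ ^ 2
          + 2 * ((1 / L) * inner ℝ (x k - y k) (gradf (y k)))
          + ‖(1 / L) • gradf (y k)‖ ^ 2)
        = L / 2 * ‖x k - y k‖ ^ 2 + (inner ℝ (x k - y k) (gradf (y k)) : ℝ)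
          + L / 2 * ‖(1 / L) • gradf (y k)‖ ^ 2 := by
      field_simp
    rw [hsimp] at h1
    have hz : μ / 2 * (0:ℝ) ^ 2 = 0 := by norm_num
    rw [hz] at h1
    linarith
  have hstep : ∀ k, H (k + 1) + μ / 2 * ‖x k - y k‖ ^ 2 ≤ H k := by
    intro k
    have h1 := key k
    have h2 := hdec k
    have h3 : lam * ((norm0 (y (k + 1)) : ℝ)) ≤ lam * (norm0 (x k) : ℝ) :=
      mul_le_mul_of_nonneg_left (Nat.cast_le.mpr (hsupp k)) hlam.le
    simp only [hH]
    linarith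
  have hHlb : ∀ k, B ≤ H k := fun k => by
    have : (0:ℝ) ≤ lam * (norm0 (y k) : ℝ) :=
      mul_nonneg hlam.le (Nat.cast_nonneg _)
    have := hB (y k); simp only [hH]; linarith
  have hpartial : ∀ m : ℕ, ∑ k ∈ Finset.range m, μ / 2 * ‖x k - y k‖ ^ 2 ≤ H 0 - B := by
    intro m
    have : ∑ k ∈ Finset.range m, μ / 2 * ‖x k - y k‖ ^ 2 ≤ H 0 - H m := by
      induction m with
      | zero => simp
      | succ m ih =>
        rw [Finset.sum_range_succ]
        have := hstep m
        linarith
    exact this.trans (sub_le_sub_left (hHlb m) (H 0))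
  have hsum : Summable fun k => μ / 2 * ‖x k - y k‖ ^ 2 :=
    summable_of_sum_range_le (fun k => by positivity) hpartial
  have hsum2 : Summable fun k => ‖x k - y k‖ ^ 2 :=
    (hsum.mul_left (2 / μ)).congr fun k => by field_simp
  refine ⟨hsum2, ?_⟩
  have h0 : Tendsto (fun k => ‖x k - y k‖ ^ 2) atTop (nhds 0) :=
    hsum2.tendsto_atTop_zero
  have := (Real.continuous_sqrt.continuousAt (x := (0:ℝ))).tendsto.comp h0
  simp only [Function.comp_def, Real.sqrt_zero] at this
  refine this.congr fun k => ?_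
  exact Real.sqrt_sq (norm_nonneg _)
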